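/- Let G be a group acting by isometries on a bounded complete metric space (X,d). For a fixed point a ∈ X, the function P_a(y) = d(a,y) has norm-precompact G-orbit in C(X) (i.e. P_a is almost periodic) if and only if the closed orbit of a is compact. -/

import Mathlib

open Filter Topology BoundedContinuousFunction

theorem stmt4 {G X : Type*} [Group G] [MetricSpace X] [CompleteSpace X] [MulAction G X]
    (hbdd : ∃ C : ℝ, ∀ x y : X, dist x y ≤ C)
    (hiso : ∀ (g : G) (x y : X), dist (g • x) (g • y) = dist x y)
    (a : X) (P : G → (X →ᵇ ℝ)) (hP : ∀ (g : G) (y : X), P g y = dist (g • a) y) :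
    IsCompact (closure (Set.range P)) ↔ IsCompact (closure (MulAction.orbit G a)) := by
  obtain ⟨C, hC⟩ := hbdd
  set e : X → (X →ᵇ ℝ) := fun x =>
    BoundedContinuousFunction.mkOfBound ⟨fun y => dist x y, continuous_const.dist continuous_id⟩ C
      (fun y z => by
        simp only [ContinuousMap.coe_mk, Real.dist_eq]
        rw [dist_comm x y, dist_comm x z]
        exact le_trans (abs_dist_sub_le y z x) (hC y z)) with he_def
  have hecoe : ∀ x y, e x y = dist x y := fun x y => rfl
  have he : Isometry e := by
    refine Isometry.of_dist_eq fun x y => le_antisymm ?_ ?_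
    · refine BoundedContinuousFunction.dist_le dist_nonneg |>.2 fun z => ?_
      rw [hecoe, hecoe, Real.dist_eq]
      exact abs_dist_sub_le x y z
    · have := BoundedContinuousFunction.dist_coe_le_dist (f := e x) (g := e y) y
      rwa [hecoe, hecoe, dist_self, Real.dist_eq, sub_zero, abs_of_nonneg dist_nonneg] at this
  have hPe : ∀ g : G, P g = e (g • a) := by
    intro g; ext y; rw [hP, hecoe]
  have hrange : Set.range P = e '' MulAction.orbit G a := by
    ext f
    constructor
    · rintro ⟨g, rfl⟩; exact ⟨g • a, ⟨g, rfl⟩, (hPe g).symm⟩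
    · rintro ⟨x, ⟨g, rfl⟩, rfl⟩; exact ⟨g, hPe g⟩
  constructor
  · intro h
    have htb : TotallyBounded (e '' MulAction.orbit G a) := by
      rw [← hrange]
      exact (h.totallyBounded).subset subset_closure
    have : TotallyBounded (MulAction.orbit G a) :=
      (totallyBounded_image_iff he.isUniformInducing).1 htb
    exact TotallyBounded.isCompact_of_isClosed this.closure isClosed_closure
  · intro h
    have hc : IsCompact (e '' closure (MulAction.orbit G a)) := h.image he.continuous
    refine hc.of_isClosed_subset isClosed_closure (closure_minimal ?_ hc.isClosed)
    rw [hrange]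
    exact Set.image_mono subset_closure
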